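/- arXiv:nlin/0505005 — 3 statements merged into one kernel-verified Lean document; each statement's English description precedes it below -/
import Mathlib

section
/- Let R = ℂ[[x]] and let D = R[∂] be the ring of differential operators. If two monic differential operators Q (of order m ≥ 1) and P (of order n ≥ 1) commute, then there exists a nonzero polynomial F ∈ ℂ[z,w] such that F(Q,P) = 0 in D. -/
open Finset PowerSeries

namespace BC

variable {D : Type*} [Ring D] (ι : PowerSeries ℂ →+* D) (δ : D)

/-- `A` has a representation with coefficients in degrees `< N`. -/
def OrdLt (N : ℕ) (A : D) : Prop :=
  ∃ a : ℕ → PowerSeries ℂ, A = ∑ i ∈ range N, ι (a i) * δ ^ i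

theorem ordLt_zero (N : ℕ) : OrdLt ι δ N 0 :=
  ⟨fun _ => 0, by simp⟩

theorem ordLt_mono {N M : ℕ} (h : N ≤ M) {A : D} (hA : OrdLt ι δ N A) : OrdLt ι δ M A := by
  obtain ⟨a, rfl⟩ := hA
  refine ⟨fun i => if i < N then a i else 0, ?_⟩
  rw [Finset.sum_congr rfl (g := fun i => ι (if i < N then a i else 0) * δ ^ i)
    (fun i hi => by simp [Finset.mem_range.mp hi])]
  exact (Finset.sum_subset (Finset.range_subset_range.mpr h)
    (fun i _ hi => by rw [if_neg (by simpa using hi), map_zero, zero_mul]))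

theorem ordLt_add {N : ℕ} {A B : D} (hA : OrdLt ι δ N A) (hB : OrdLt ι δ N B) :
    OrdLt ι δ N (A + B) := by
  obtain ⟨a, rfl⟩ := hA
  obtain ⟨b, rfl⟩ := hB
  exact ⟨fun i => a i + b i, by simp [map_add, add_mul, Finset.sum_add_distrib]⟩

theorem ordLt_sum {N : ℕ} {α : Type*} (s : Finset α) (f : α → D)
    (h : ∀ x ∈ s, OrdLt ι δ N (f x)) : OrdLt ι δ N (∑ x ∈ s, f x) := by
  classical
  induction s using Finset.induction_on with
  | empty => simpa using ordLt_zero ι δ N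
  | insert _ _ hx ih =>
      rw [Finset.sum_insert hx]
      exact ordLt_add ι δ (h _ (Finset.mem_insert_self _ _))
        (ih fun x hx => h x (Finset.mem_insert_of_mem hx))

theorem ordLt_neg {N : ℕ} {A : D} (hA : OrdLt ι δ N A) : OrdLt ι δ N (-A) := by
  obtain ⟨a, rfl⟩ := hA
  exact ⟨fun i => -a i, by simp [Finset.sum_neg_distrib]⟩

theorem ordLt_iota_mul {N : ℕ} (c : PowerSeries ℂ) {A : D} (hA : OrdLt ι δ N A) :
    OrdLt ι δ N (ι c * A) := by
  obtain ⟨a, rfl⟩ := hA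
  refine ⟨fun i => c * a i, ?_⟩
  rw [Finset.mul_sum]
  exact Finset.sum_congr rfl fun i _ => by rw [← mul_assoc, ← map_mul]

theorem ordLt_monomial (c : PowerSeries ℂ) (k : ℕ) : OrdLt ι δ (k + 1) (ι c * δ ^ k) := by
  classical
  refine ⟨fun i => if i = k then c else 0, ?_⟩
  rw [Finset.sum_eq_single_of_mem k (by simp)]
  · simp
  · intro b _ hb
    simp [hb]

theorem ordLt_mul_delta {N : ℕ} {A : D} (hA : OrdLt ι δ N A) : OrdLt ι δ (N + 1) (A * δ) := by
  obtain ⟨a, rfl⟩ := hA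
  refine ⟨fun i => if i = 0 then 0 else a (i - 1), ?_⟩
  rw [Finset.sum_range_succ' (fun i => ι (if i = 0 then 0 else a (i - 1)) * δ ^ i) N]
  simp only [Nat.succ_ne_zero, if_false, Nat.add_sub_cancel, if_pos, map_zero, zero_mul,
    pow_zero, add_zero, ite_true, ite_false]
  rw [Finset.sum_mul]
  exact Finset.sum_congr rfl fun i _ => by rw [mul_assoc, ← pow_succ]

theorem ordLt_mul_delta_pow {N : ℕ} (k : ℕ) {A : D} (hA : OrdLt ι δ N A) :
    OrdLt ι δ (N + k) (A * δ ^ k) := by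
  induction k with
  | zero => simpa using hA
  | succ k ih =>
      have := ordLt_mul_delta ι δ ih
      rw [mul_assoc, ← pow_succ] at this
      simpa [add_assoc] using this

theorem ordLt_delta_mul {N : ℕ} {A : D}
    (hrel : ∀ a : PowerSeries ℂ, δ * ι a = ι a * δ + ι (PowerSeries.derivative (R := ℂ) a))
    (hA : OrdLt ι δ N A) : OrdLt ι δ (N + 1) (δ * A) := by
  obtain ⟨a, hrepr⟩ := hA
  have : δ * A = A * δ + ∑ i ∈ range N, ι (PowerSeries.derivative (R := ℂ) (a i)) * δ ^ i := by
    rw [hrepr, Finset.mul_sum, Finset.sum_mul, ← Finset.sum_add_distrib]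
    refine Finset.sum_congr rfl fun i _ => ?_
    rw [← mul_assoc, hrel, add_mul, mul_assoc, mul_assoc, ← pow_succ, ← pow_succ']
  rw [this]
  exact ordLt_add ι δ (ordLt_mul_delta ι δ ⟨a, hrepr⟩)
    (ordLt_mono ι δ (Nat.le_succ N) ⟨_, rfl⟩)



/-- Weak form: `δ^k * ι b = ι b * δ^k + (order < k)`. -/
theorem delta_pow_mul_iota_weak (hrel : ∀ a : PowerSeries ℂ, δ * ι a = ι a * δ + ι (PowerSeries.derivative (R := ℂ) a)) (k : ℕ) (b : PowerSeries ℂ) :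
    ∃ E : D, OrdLt ι δ k E ∧ δ ^ k * ι b = ι b * δ ^ k + E := by
  induction k with
  | zero => exact ⟨0, ordLt_zero ι δ 0, by simp⟩
  | succ k ih =>
      obtain ⟨E, hE, hEq⟩ := ih
      refine ⟨ι (PowerSeries.derivative (R := ℂ) b) * δ ^ k + δ * E,
        ordLt_add ι δ (ordLt_monomial ι δ _ k) (ordLt_delta_mul ι δ hrel hE), ?_⟩
      rw [pow_succ', mul_assoc, hEq, mul_add, ← mul_assoc, hrel, add_mul, mul_assoc, ← pow_succ']
      abel

/-- Strong form with the subleading term recorded. -/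
theorem delta_pow_mul_iota_strong (hrel : ∀ a : PowerSeries ℂ, δ * ι a = ι a * δ + ι (PowerSeries.derivative (R := ℂ) a)) (k : ℕ) (b : PowerSeries ℂ) :
    ∃ E : D, OrdLt ι δ k E ∧ δ ^ (k + 1) * ι b = ι b * δ ^ (k + 1) +
      ι (((k : ℂ) + 1) • PowerSeries.derivative (R := ℂ) b) * δ ^ k + E := by
  induction k with
  | zero =>
      refine ⟨0, ordLt_zero ι δ 0, ?_⟩
      simpa using hrel b
  | succ k ih =>
      obtain ⟨E, hE, hEq⟩ := ih
      refine ⟨ι (((k : ℂ) + 1) • PowerSeries.derivative (R := ℂ)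
          (PowerSeries.derivative (R := ℂ) b)) * δ ^ k + δ * E,
        ordLt_add ι δ (ordLt_monomial ι δ _ k) (ordLt_delta_mul ι δ hrel hE), ?_⟩
      have h1 : δ ^ (k + 1 + 1) * ι b = δ * (δ ^ (k + 1) * ι b) := by
        rw [← mul_assoc, ← pow_succ']
      have hd : PowerSeries.derivative (R := ℂ) (((k : ℂ) + 1) •
          PowerSeries.derivative (R := ℂ) b) =
          ((k : ℂ) + 1) • PowerSeries.derivative (R := ℂ)
            (PowerSeries.derivative (R := ℂ) b) :=
        Derivation.map_smul _ _ _
      have hsm : ι (PowerSeries.derivative (R := ℂ) b) +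
          ι (((k : ℂ) + 1) • PowerSeries.derivative (R := ℂ) b) =
          ι (((k : ℂ) + 1 + 1) • PowerSeries.derivative (R := ℂ) b) := by
        rw [← map_add]
        congr 1
        rw [add_smul ((k : ℂ) + 1) 1, one_smul]
        abel
      have t1 : δ * (ι b * δ ^ (k + 1)) = ι b * δ ^ (k + 1 + 1) +
          ι (PowerSeries.derivative (R := ℂ) b) * δ ^ (k + 1) := by
        rw [← mul_assoc, hrel, add_mul, mul_assoc, ← pow_succ']
      have t2 : δ * (ι (((k : ℂ) + 1) • PowerSeries.derivative (R := ℂ) b) * δ ^ k) =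
          ι (((k : ℂ) + 1) • PowerSeries.derivative (R := ℂ) b) * δ ^ (k + 1) +
          ι (((k : ℂ) + 1) • PowerSeries.derivative (R := ℂ)
            (PowerSeries.derivative (R := ℂ) b)) * δ ^ k := by
        rw [← mul_assoc, hrel, hd, add_mul, mul_assoc, ← pow_succ']
      rw [h1, hEq, mul_add, mul_add, t1, t2]
      push_cast
      rw [← hsm, add_mul]
      abel

theorem ordLt_delta_pow_mul (hrel : ∀ a : PowerSeries ℂ, δ * ι a = ι a * δ + ι (PowerSeries.derivative (R := ℂ) a)) {M : ℕ} (k : ℕ) {B : D} (hB : OrdLt ι δ M B) :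
    OrdLt ι δ (k + M) (δ ^ k * B) := by
  obtain ⟨b, rfl⟩ := hB
  rw [Finset.mul_sum]
  refine ordLt_sum ι δ _ _ fun j hj => ?_
  obtain ⟨E, hE, hEq⟩ := delta_pow_mul_iota_weak ι δ hrel k (b j)
  have hjM := Finset.mem_range.mp hj
  rw [← mul_assoc, hEq, add_mul]
  refine ordLt_add ι δ ?_ ?_
  · rw [mul_assoc, ← pow_add]
    exact ordLt_mono ι δ (by omega) (ordLt_monomial ι δ _ (k + j))
  · have := ordLt_mul_delta_pow ι δ j hE
    exact ordLt_mono ι δ (by omega) this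

theorem ordLt_mul (hrel : ∀ a : PowerSeries ℂ, δ * ι a = ι a * δ + ι (PowerSeries.derivative (R := ℂ) a)) {N M : ℕ} {A B : D} (hA : OrdLt ι δ N A) (hB : OrdLt ι δ M B) :
    OrdLt ι δ (N + M) (A * B) := by
  obtain ⟨a, rfl⟩ := hA
  rw [Finset.sum_mul]
  refine ordLt_sum ι δ _ _ fun i hi => ?_
  rw [mul_assoc]
  refine ordLt_iota_mul ι δ _ ?_
  refine ordLt_mono ι δ ?_ (ordLt_delta_pow_mul ι δ hrel i hB)
  have := Finset.mem_range.mp hi; omega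

/-- commutator of two monomials drops order. -/
theorem comm_monomial (hrel : ∀ a : PowerSeries ℂ, δ * ι a = ι a * δ + ι (PowerSeries.derivative (R := ℂ) a)) (c b : PowerSeries ℂ) (k j : ℕ) :
    OrdLt ι δ (k + j) (ι c * δ ^ k * (ι b * δ ^ j) - ι b * δ ^ j * (ι c * δ ^ k)) := by
  obtain ⟨E, hE, hEq⟩ := delta_pow_mul_iota_weak ι δ hrel k b
  obtain ⟨F, hF, hFq⟩ := delta_pow_mul_iota_weak ι δ hrel j c
  have h1 : ι c * δ ^ k * (ι b * δ ^ j) = ι (c * b) * δ ^ (k + j) + ι c * E * δ ^ j := by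
    calc ι c * δ ^ k * (ι b * δ ^ j) = ι c * (δ ^ k * ι b) * δ ^ j := by noncomm_ring
      _ = ι c * (ι b * δ ^ k + E) * δ ^ j := by rw [hEq]
      _ = ι (c * b) * δ ^ (k + j) + ι c * E * δ ^ j := by rw [map_mul, pow_add]; noncomm_ring
  have h2 : ι b * δ ^ j * (ι c * δ ^ k) = ι (c * b) * δ ^ (k + j) + ι b * F * δ ^ k := by
    calc ι b * δ ^ j * (ι c * δ ^ k) = ι b * (δ ^ j * ι c) * δ ^ k := by noncomm_ring
      _ = ι b * (ι c * δ ^ j + F) * δ ^ k := by rw [hFq]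
      _ = ι b * (ι c * δ ^ j) * δ ^ k + ι b * F * δ ^ k := by noncomm_ring
      _ = (ι b * ι c) * (δ ^ j * δ ^ k) + ι b * F * δ ^ k := by noncomm_ring
      _ = ι (c * b) * δ ^ (k + j) + ι b * F * δ ^ k := by
          rw [← map_mul, mul_comm b c, ← pow_add, add_comm j k]
  rw [h1, h2]
  have h3 : ι (c*b) * δ ^ (k+j) + ι c * E * δ ^ j - (ι (c*b) * δ ^ (k+j) + ι b * F * δ ^ k) =
      ι c * E * δ ^ j + -(ι b * F * δ ^ k) := by noncomm_ring
  rw [h3]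
  refine ordLt_add ι δ ?_ (ordLt_neg ι δ ?_)
  · exact ordLt_mul_delta_pow ι δ j (ordLt_iota_mul ι δ c hE)
  · exact ordLt_mono ι δ (by omega) (ordLt_mul_delta_pow ι δ k (ordLt_iota_mul ι δ b hF))

/-- Commutators drop order by (at least) one. -/
theorem comm_ordLt (hrel : ∀ a : PowerSeries ℂ, δ * ι a = ι a * δ + ι (PowerSeries.derivative (R := ℂ) a)) {N M : ℕ} {A B : D} (hA : OrdLt ι δ N A) (hB : OrdLt ι δ M B) :
    OrdLt ι δ (N + M - 2) (A * B - B * A) := by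
  obtain ⟨a, rfl⟩ := hA
  obtain ⟨b, rfl⟩ := hB
  rw [Finset.sum_mul_sum, Finset.sum_mul_sum, Finset.sum_comm (s := range M) (t := range N),
    ← Finset.sum_sub_distrib]
  refine ordLt_sum ι δ _ _ fun i hi => ?_
  rw [← Finset.sum_sub_distrib]
  refine ordLt_sum ι δ _ _ fun j hj => ?_
  refine ordLt_mono ι δ ?_ (comm_monomial ι δ hrel (a i) (b j) i j)
  have := Finset.mem_range.mp hi
  have := Finset.mem_range.mp hj
  omega

/-- Monic of order `k`. -/
def Monic (k : ℕ) (A : D) : Prop := ∃ E : D, OrdLt ι δ k E ∧ A = δ ^ k + E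

theorem monic_ordLt {k : ℕ} {A : D} (hA : Monic ι δ k A) : OrdLt ι δ (k + 1) A := by
  obtain ⟨E, hE, rfl⟩ := hA
  refine ordLt_add ι δ ?_ (ordLt_mono ι δ (Nat.le_succ k) hE)
  simpa using ordLt_monomial ι δ 1 k

theorem monic_mul (hrel : ∀ a : PowerSeries ℂ, δ * ι a = ι a * δ + ι (PowerSeries.derivative (R := ℂ) a)) {k l : ℕ} {A B : D} (hA : Monic ι δ k A) (hB : Monic ι δ l B) :
    Monic ι δ (k + l) (A * B) := by
  obtain ⟨E, hE, rfl⟩ := hA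
  obtain ⟨F, hF, rfl⟩ := hB
  refine ⟨δ ^ k * F + E * δ ^ l + E * F, ?_, by
    rw [pow_add, add_mul, mul_add, mul_add]; abel⟩
  refine ordLt_add ι δ (ordLt_add ι δ ?_ ?_) ?_
  · exact ordLt_delta_pow_mul ι δ hrel k hF
  · have := ordLt_mul_delta_pow ι δ l hE
    exact ordLt_mono ι δ (by omega) this
  · exact ordLt_mul ι δ hrel hE hF

theorem monic_pow (hrel : ∀ a : PowerSeries ℂ, δ * ι a = ι a * δ + ι (PowerSeries.derivative (R := ℂ) a)) {k : ℕ} {A : D} (hA : Monic ι δ k A) (j : ℕ) :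
    Monic ι δ (k * j) (A ^ j) := by
  induction j with
  | zero => exact ⟨0, ordLt_zero ι δ 0, by simp⟩
  | succ j ih =>
      have := monic_mul ι δ hrel ih hA
      rw [← pow_succ] at this
      simpa [Nat.mul_succ] using this

section Coeff

variable (hspan : ∀ A : D, ∃ (N : ℕ) (a : ℕ → PowerSeries ℂ),
    A = ∑ i ∈ range (N + 1), ι (a i) * δ ^ i)

/-- Padding a representation. -/
theorem pad_rep {N K : ℕ} (h : N ≤ K) (a : ℕ → PowerSeries ℂ) :
    ∑ i ∈ range N, ι (a i) * δ ^ i =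
      ∑ i ∈ range K, ι (if i < N then a i else 0) * δ ^ i := by
  rw [Finset.sum_congr rfl (g := fun i => ι (if i < N then a i else 0) * δ ^ i)
    (fun i hi => by simp [Finset.mem_range.mp hi])]
  exact Finset.sum_subset (Finset.range_subset_range.mpr h)
    (fun i _ hi => by rw [if_neg (by simpa using hi), map_zero, zero_mul])

/-- Coefficients of a representation are unique. -/
theorem rep_ext
    (hind : ∀ (N : ℕ) (a : ℕ → PowerSeries ℂ),
      (∑ i ∈ range (N + 1), ι (a i) * δ ^ i) = 0 → ∀ i ≤ N, a i = 0)
    {N M : ℕ} {a b : ℕ → PowerSeries ℂ}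
    (h : ∑ i ∈ range (N + 1), ι (a i) * δ ^ i = ∑ i ∈ range (M + 1), ι (b i) * δ ^ i) :
    ∀ i, (if i ≤ N then a i else 0) = (if i ≤ M then b i else 0) := by
  intro i
  set K := max N M with hK
  set a' : ℕ → PowerSeries ℂ := fun i => if i ≤ N then a i else 0 with ha'
  set b' : ℕ → PowerSeries ℂ := fun i => if i ≤ M then b i else 0 with hb'
  have hpa : ∑ i ∈ range (N + 1), ι (a i) * δ ^ i =
      ∑ i ∈ range (K + 1), ι (a' i) * δ ^ i := by
    rw [pad_rep ι δ (show N + 1 ≤ K + 1 by omega) a]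
    exact Finset.sum_congr rfl fun i _ => by
      simp only [ha', Nat.lt_succ_iff]
  have hpb : ∑ i ∈ range (M + 1), ι (b i) * δ ^ i =
      ∑ i ∈ range (K + 1), ι (b' i) * δ ^ i := by
    rw [pad_rep ι δ (show M + 1 ≤ K + 1 by omega) b]
    exact Finset.sum_congr rfl fun i _ => by
      simp only [hb', Nat.lt_succ_iff]
  have hzero : ∑ i ∈ range (K + 1), ι (a' i - b' i) * δ ^ i = 0 := by
    have : ∑ i ∈ range (K + 1), ι (a' i - b' i) * δ ^ i =
        ∑ i ∈ range (K + 1), ι (a' i) * δ ^ i - ∑ i ∈ range (K + 1), ι (b' i) * δ ^ i := by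
      rw [← Finset.sum_sub_distrib]
      exact Finset.sum_congr rfl fun i _ => by rw [map_sub, sub_mul]
    rw [this, ← hpa, ← hpb, h, sub_self]
  have := hind K _ hzero
  by_cases hi : i ≤ K
  · have h2 := this i hi
    have := sub_eq_zero.mp h2
    simpa [ha', hb'] using this
  · have hiN : ¬ i ≤ N := by omega
    have hiM : ¬ i ≤ M := by omega
    rw [if_neg hiN, if_neg hiM]

/-- The canonical coefficients of an element. -/
noncomputable def coeffD (A : D) : ℕ → PowerSeries ℂ :=
  fun i => if i ≤ (hspan A).choose then (hspan A).choose_spec.choose i else 0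

theorem coeffD_repr (A : D) :
    A = ∑ i ∈ range ((hspan A).choose + 1), ι (coeffD ι δ hspan A i) * δ ^ i := by
  conv_lhs => rw [(hspan A).choose_spec.choose_spec]
  exact Finset.sum_congr rfl fun i hi => by
    rw [coeffD, if_pos (by simpa [Nat.lt_succ_iff] using hi)]

theorem coeffD_gt {A : D} {i : ℕ} (h : (hspan A).choose < i) : coeffD ι δ hspan A i = 0 :=
  if_neg (by omega)

theorem coeffD_eq
    (hind : ∀ (N : ℕ) (a : ℕ → PowerSeries ℂ),
      (∑ i ∈ range (N + 1), ι (a i) * δ ^ i) = 0 → ∀ i ≤ N, a i = 0)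
    {N : ℕ} {a : ℕ → PowerSeries ℂ} {A : D}
    (h : A = ∑ i ∈ range (N + 1), ι (a i) * δ ^ i) :
    ∀ i, coeffD ι δ hspan A i = if i ≤ N then a i else 0 := by
  intro i
  have h2 := rep_ext ι δ hind ((coeffD_repr ι δ hspan A).symm.trans h) i
  by_cases hi : i ≤ (hspan A).choose
  · rw [← h2, if_pos hi]
  · rw [← h2, if_neg hi, coeffD_gt ι δ hspan (by omega)]

end Coeff

section CoeffLemmas

variable (hspan : ∀ A : D, ∃ (N : ℕ) (a : ℕ → PowerSeries ℂ),
    A = ∑ i ∈ range (N + 1), ι (a i) * δ ^ i)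
  (hind : ∀ (N : ℕ) (a : ℕ → PowerSeries ℂ),
    (∑ i ∈ range (N + 1), ι (a i) * δ ^ i) = 0 → ∀ i ≤ N, a i = 0)

include hind

theorem coeffD_repr' {A : D} {K : ℕ} (hK : (hspan A).choose ≤ K) :
    A = ∑ i ∈ range (K + 1), ι (coeffD ι δ hspan A i) * δ ^ i := by
  conv_lhs => rw [coeffD_repr ι δ hspan A]
  exact Finset.sum_subset (Finset.range_subset_range.mpr (by omega))
    (fun i _ hi => by
      rw [coeffD_gt ι δ hspan (by simpa [Nat.lt_succ_iff] using hi), map_zero, zero_mul])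

theorem coeffD_zero_el (i : ℕ) : coeffD ι δ hspan (0 : D) i = 0 := by
  have h : (0 : D) = ∑ j ∈ range (0 + 1), ι ((fun _ => (0 : PowerSeries ℂ)) j) * δ ^ j := by
    simp
  rw [coeffD_eq ι δ hspan hind h i]
  split <;> rfl

theorem coeffD_add (A B : D) (i : ℕ) :
    coeffD ι δ hspan (A + B) i = coeffD ι δ hspan A i + coeffD ι δ hspan B i := by
  have hAK : (hspan A).choose ≤ max (hspan A).choose (hspan B).choose := le_max_left _ _
  have hBK : (hspan B).choose ≤ max (hspan A).choose (hspan B).choose := le_max_right _ _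
  have h : A + B = ∑ j ∈ range (max (hspan A).choose (hspan B).choose + 1),
      ι (coeffD ι δ hspan A j + coeffD ι δ hspan B j) * δ ^ j := by
    symm
    calc ∑ j ∈ range (max (hspan A).choose (hspan B).choose + 1),
          ι (coeffD ι δ hspan A j + coeffD ι δ hspan B j) * δ ^ j
        = ∑ j ∈ range (max (hspan A).choose (hspan B).choose + 1),
            (ι (coeffD ι δ hspan A j) * δ ^ j + ι (coeffD ι δ hspan B j) * δ ^ j) :=
          Finset.sum_congr rfl fun j _ => by rw [map_add, add_mul]
      _ = (∑ j ∈ range (max (hspan A).choose (hspan B).choose + 1),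
            ι (coeffD ι δ hspan A j) * δ ^ j) +
          ∑ j ∈ range (max (hspan A).choose (hspan B).choose + 1),
            ι (coeffD ι δ hspan B j) * δ ^ j := Finset.sum_add_distrib
      _ = A + B := by
          rw [← coeffD_repr' ι δ hspan hind hAK, ← coeffD_repr' ι δ hspan hind hBK]
  rw [coeffD_eq ι δ hspan hind h i]
  by_cases hi : i ≤ max (hspan A).choose (hspan B).choose
  · rw [if_pos hi]
  · rw [if_neg hi, coeffD_gt ι δ hspan (A := A) (by omega),
      coeffD_gt ι δ hspan (A := B) (by omega), add_zero]

theorem coeffD_sum {α : Type*} (s : Finset α) (f : α → D) (i : ℕ) :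
    coeffD ι δ hspan (∑ x ∈ s, f x) i = ∑ x ∈ s, coeffD ι δ hspan (f x) i := by
  classical
  induction s using Finset.induction_on with
  | empty => simpa using coeffD_zero_el ι δ hspan hind i
  | insert _ _ hx ih =>
      rw [Finset.sum_insert hx, Finset.sum_insert hx, coeffD_add ι δ hspan hind, ih]

theorem coeffD_iota_mul (c : PowerSeries ℂ) (A : D) (i : ℕ) :
    coeffD ι δ hspan (ι c * A) i = c * coeffD ι δ hspan A i := by
  have h : ι c * A = ∑ j ∈ range ((hspan A).choose + 1),
      ι (c * coeffD ι δ hspan A j) * δ ^ j := by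
    conv_lhs => rw [coeffD_repr ι δ hspan A]
    rw [Finset.mul_sum]
    exact Finset.sum_congr rfl fun j _ => by rw [map_mul, mul_assoc]
  rw [coeffD_eq ι δ hspan hind h i]
  by_cases hi : i ≤ (hspan A).choose
  · rw [if_pos hi]
  · rw [if_neg hi, coeffD_gt ι δ hspan (by omega), mul_zero]

theorem coeffD_of_ordLt {N : ℕ} {A : D} (hA : OrdLt ι δ N A) :
    ∀ i, N ≤ i → coeffD ι δ hspan A i = 0 := by
  obtain ⟨a, ha⟩ := hA
  intro i hi
  have h : A = ∑ j ∈ range (N + 1), ι (if j < N then a j else 0) * δ ^ j := by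
    rw [ha]; exact pad_rep ι δ (Nat.le_succ N) a
  rw [coeffD_eq ι δ hspan hind h i]
  by_cases h1 : i ≤ N
  · rw [if_pos h1, if_neg (by omega)]
  · rw [if_neg h1]

theorem coeffD_monomial (c : PowerSeries ℂ) (k : ℕ) :
    coeffD ι δ hspan (ι c * δ ^ k) k = c := by
  classical
  have h : ι c * δ ^ k = ∑ j ∈ range (k + 1), ι (if j = k then c else 0) * δ ^ j := by
    rw [Finset.sum_eq_single_of_mem k (by simp)]
    · simp
    · intro b _ hb; simp [hb]
  rw [coeffD_eq ι δ hspan hind h k, if_pos le_rfl, if_pos rfl]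

theorem coeffD_monic {k : ℕ} {A : D} (hA : Monic ι δ k A) :
    coeffD ι δ hspan A k = 1 ∧ ∀ i, k < i → coeffD ι δ hspan A i = 0 := by
  classical
  obtain ⟨E, ⟨e, rfl⟩, rfl⟩ := hA
  have h : δ ^ k + ∑ i ∈ range k, ι (e i) * δ ^ i =
      ∑ j ∈ range (k + 1), ι (if j = k then 1 else e j) * δ ^ j := by
    rw [Finset.sum_range_succ, if_pos rfl, map_one, one_mul, add_comm]
    congr 1
    exact Finset.sum_congr rfl fun j hj => by
      rw [if_neg (by have := Finset.mem_range.mp hj; omega)]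
  constructor
  · rw [coeffD_eq ι δ hspan hind h k, if_pos le_rfl, if_pos rfl]
  · intro i hi
    rw [coeffD_eq ι δ hspan hind h i, if_neg (by omega)]

theorem eq_zero_of_coeffD {A : D} (h : ∀ i, coeffD ι δ hspan A i = 0) : A = 0 := by
  rw [coeffD_repr ι δ hspan A]
  exact Finset.sum_eq_zero fun i _ => by rw [h i, map_zero, zero_mul]

theorem exists_top {A : D} (hA : A ≠ 0) :
    ∃ d : ℕ, coeffD ι δ hspan A d ≠ 0 ∧ ∀ i, d < i → coeffD ι δ hspan A i = 0 := by
  classical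
  set S := (range ((hspan A).choose + 1)).filter (fun i => coeffD ι δ hspan A i ≠ 0) with hS
  have hSne : S.Nonempty := by
    by_contra hcon
    refine hA (eq_zero_of_coeffD ι δ hspan hind ?_)
    intro i
    by_cases hi : i ≤ (hspan A).choose
    · by_contra hne
      exact hcon ⟨i, Finset.mem_filter.mpr ⟨Finset.mem_range.mpr (by omega), hne⟩⟩
    · exact coeffD_gt ι δ hspan (by omega)
  refine ⟨S.max' hSne, (Finset.mem_filter.mp (S.max'_mem hSne)).2, ?_⟩
  intro i hi
  by_cases hic : i ≤ (hspan A).choose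
  · by_contra hne
    have := Finset.le_max' S i (Finset.mem_filter.mpr ⟨Finset.mem_range.mpr (by omega), hne⟩)
    omega
  · exact coeffD_gt ι δ hspan (by omega)

theorem repr_of_top {A : D} {d : ℕ} (h : ∀ i, d < i → coeffD ι δ hspan A i = 0) :
    A = ∑ i ∈ range (d + 1), ι (coeffD ι δ hspan A i) * δ ^ i := by
  conv_lhs => rw [coeffD_repr' ι δ hspan hind (A := A) (K := max d (hspan A).choose)
    (le_max_right _ _)]
  exact (Finset.sum_subset (Finset.range_subset_range.mpr (by omega))
    (fun i _ hi => by
      rw [h i (by simpa [Nat.lt_succ_iff] using hi), map_zero, zero_mul])).symm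

end CoeffLemmas

section Central

variable (hrel : ∀ a : PowerSeries ℂ, δ * ι a = ι a * δ + ι (PowerSeries.derivative (R := ℂ) a))
  (hspan : ∀ A : D, ∃ (N : ℕ) (a : ℕ → PowerSeries ℂ),
    A = ∑ i ∈ range (N + 1), ι (a i) * δ ^ i)
  (hind : ∀ (N : ℕ) (a : ℕ → PowerSeries ℂ),
    (∑ i ∈ range (N + 1), ι (a i) * δ ^ i) = 0 → ∀ i ≤ N, a i = 0)

include hrel hind

/-- If `A` commutes with a monic operator of positive order, its top coefficient
has vanishing derivative. -/
theorem lead_deriv_zero {A : D} {d : ℕ}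
    (htop1 : coeffD ι δ hspan A d ≠ 0)
    (htop2 : ∀ i, d < i → coeffD ι δ hspan A i = 0)
    {k' : ℕ} {W : D} (hW : Monic ι δ (k' + 1) W) (hcom : A * W = W * A) :
    PowerSeries.derivative (R := ℂ) (coeffD ι δ hspan A d) = 0 := by
  set a := coeffD ι δ hspan A d with ha
  set c : PowerSeries ℂ := ((k' : ℂ) + 1) • PowerSeries.derivative (R := ℂ) a with hc
  obtain ⟨U, hU, hWeq⟩ := hW
  have hAeq : A = ι a * δ ^ d + ∑ i ∈ range d, ι (coeffD ι δ hspan A i) * δ ^ i := by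
    conv_lhs => rw [repr_of_top ι δ hspan hind htop2]
    rw [Finset.sum_range_succ, add_comm]
  set A₀ : D := ∑ i ∈ range d, ι (coeffD ι δ hspan A i) * δ ^ i with hA₀
  have hA₀ord : OrdLt ι δ d A₀ := ⟨_, rfl⟩
  obtain ⟨E₁, hE₁, hstrong⟩ := delta_pow_mul_iota_strong ι δ hrel k' a
  -- commutation of the leading terms
  have hpc : δ ^ (k' + 1) * δ ^ d = δ ^ d * δ ^ (k' + 1) := by
    rw [← pow_add, ← pow_add, add_comm]
  have hpc2 : δ ^ k' * δ ^ d = δ ^ (d + k') := by rw [← pow_add, add_comm]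
  have hTS : δ ^ (k' + 1) * (ι a * δ ^ d) =
      (ι a * δ ^ d) * δ ^ (k' + 1) + ι c * δ ^ (d + k') + E₁ * δ ^ d := by
    calc δ ^ (k' + 1) * (ι a * δ ^ d) = (δ ^ (k' + 1) * ι a) * δ ^ d := by rw [mul_assoc]
      _ = (ι a * δ ^ (k' + 1) + ι c * δ ^ k' + E₁) * δ ^ d := by rw [hstrong]
      _ = ι a * (δ ^ (k' + 1) * δ ^ d) + ι c * (δ ^ k' * δ ^ d) + E₁ * δ ^ d := by
          noncomm_ring
      _ = _ := by rw [hpc, hpc2, ← mul_assoc]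
  have hT1 : (ι a * δ ^ d) * δ ^ (k' + 1) - δ ^ (k' + 1) * (ι a * δ ^ d) =
      -(ι c * δ ^ (d + k')) - E₁ * δ ^ d := by rw [hTS]; noncomm_ring
  -- decomposition of the commutator
  have hdec : (0 : D) = (((ι a * δ ^ d) * δ ^ (k' + 1) - δ ^ (k' + 1) * (ι a * δ ^ d)) +
      (((ι a * δ ^ d) * U - U * (ι a * δ ^ d)) +
        ((A₀ * δ ^ (k' + 1) - δ ^ (k' + 1) * A₀) + (A₀ * U - U * A₀)))) := by
    have h0 : (0 : D) = A * W - W * A := by rw [hcom, sub_self]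
    rw [h0]
    conv_lhs => rw [hAeq, hWeq]
    noncomm_ring
  have hkey : ι c * δ ^ (d + k') = -(E₁ * δ ^ d) +
      ((((ι a * δ ^ d) * U - U * (ι a * δ ^ d)) +
        ((A₀ * δ ^ (k' + 1) - δ ^ (k' + 1) * A₀) + (A₀ * U - U * A₀)))) := by
    rw [hT1] at hdec
    calc ι c * δ ^ (d + k') = ι c * δ ^ (d + k') +
          ((-(ι c * δ ^ (d + k')) - E₁ * δ ^ d) +
            (((ι a * δ ^ d) * U - U * (ι a * δ ^ d)) +
              ((A₀ * δ ^ (k' + 1) - δ ^ (k' + 1) * A₀) + (A₀ * U - U * A₀)))) := by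
            rw [← hdec, add_zero]
      _ = _ := by abel
  -- the right-hand side has order `< d + k'`
  have hord : OrdLt ι δ (d + k') (-(E₁ * δ ^ d) +
      ((((ι a * δ ^ d) * U - U * (ι a * δ ^ d)) +
        ((A₀ * δ ^ (k' + 1) - δ ^ (k' + 1) * A₀) + (A₀ * U - U * A₀))))) := by
    refine ordLt_add ι δ (ordLt_neg ι δ ?_) (ordLt_add ι δ ?_ (ordLt_add ι δ ?_ ?_))
    · exact ordLt_mono ι δ (by omega) (ordLt_mul_delta_pow ι δ d hE₁)
    · refine ordLt_mono ι δ ?_ (comm_ordLt ι δ hrel (ordLt_monomial ι δ a d) hU)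
      omega
    · have hT : OrdLt ι δ (k' + 1 + 1) (δ ^ (k' + 1)) := by
        have := ordLt_monomial ι δ (1 : PowerSeries ℂ) (k' + 1)
        simpa using this
      refine ordLt_mono ι δ ?_ (comm_ordLt ι δ hrel hA₀ord hT)
      omega
    · refine ordLt_mono ι δ ?_ (comm_ordLt ι δ hrel hA₀ord hU)
      omega
  have hczero : c = 0 := by
    have h1 : coeffD ι δ hspan (ι c * δ ^ (d + k')) (d + k') = c :=
      coeffD_monomial ι δ hspan hind c (d + k')
    rw [hkey] at h1
    rw [coeffD_of_ordLt ι δ hspan hind hord (d + k') le_rfl] at h1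
    exact h1.symm
  have hne : ((k' : ℂ) + 1) ≠ 0 := Nat.cast_add_one_ne_zero k'
  have := congrArg (fun g => ((k' : ℂ) + 1)⁻¹ • g) hczero
  simpa [hc, smul_smul, inv_mul_cancel₀ hne] using this

end Central

theorem constCoeff_ne_zero_of_deriv {a : PowerSeries ℂ} (ha : a ≠ 0)
    (hd : PowerSeries.derivative (R := ℂ) a = 0) :
    PowerSeries.constantCoeff (R := ℂ) a ≠ 0 := by
  intro h0
  apply ha
  ext j
  cases j with
  | zero => simp [PowerSeries.coeff_zero_eq_constantCoeff, h0]
  | succ j =>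
      have h1 := congrArg (PowerSeries.coeff (R := ℂ) j) hd
      rw [PowerSeries.coeff_derivative, map_zero] at h1
      have h2 : ((j : ℂ) + 1) ≠ 0 := Nat.cast_add_one_ne_zero j
      rcases mul_eq_zero.mp h1 with h | h
      · rw [h, map_zero]
      · exact absurd h h2

end BC

/-- **Burchnall–Chaundy theorem.**  Let `R = ℂ[[x]]` and let `D = R[∂]` be the ring of
differential operators over `R` (axiomatized as a ring containing `R` via `ι`, with an
element `δ` satisfying `δ * a = a * δ + a'`, every element being uniquely a finite sum
`∑ ι (a i) * δ ^ i`).  If `Q` (monic of order `m ≥ 1`) and `P` (monic of order `n ≥ 1`)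
commute, then there is a nonzero polynomial `F ∈ ℂ[z,w]` with `F(Q,P) = 0` in `D`. -/
theorem burchnall_chaundy
    {D : Type*} [Ring D]
    (ι : PowerSeries ℂ →+* D) (δ : D)
    (hrel : ∀ a : PowerSeries ℂ, δ * ι a = ι a * δ + ι (PowerSeries.derivative (R := ℂ) a))
    (hspan : ∀ A : D, ∃ (N : ℕ) (a : ℕ → PowerSeries ℂ),
      A = ∑ i ∈ range (N + 1), ι (a i) * δ ^ i)
    (hind : ∀ (N : ℕ) (a : ℕ → PowerSeries ℂ),
      (∑ i ∈ range (N + 1), ι (a i) * δ ^ i) = 0 → ∀ i ≤ N, a i = 0)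
    (m n : ℕ) (hm : 1 ≤ m) (hn : 1 ≤ n)
    (u v : ℕ → PowerSeries ℂ)
    (Q P : D)
    (hQ : Q = δ ^ m + ∑ i ∈ range m, ι (u i) * δ ^ i)
    (hP : P = δ ^ n + ∑ i ∈ range n, ι (v i) * δ ^ i)
    (hcomm : P * Q = Q * P) :
    ∃ F : MvPolynomial (Fin 2) ℂ, F ≠ 0 ∧
      ∑ mono ∈ F.support,
        ι (PowerSeries.C (R := ℂ) (MvPolynomial.coeff mono F)) * Q ^ mono 0 * P ^ mono 1 = 0 := by
  classical
  obtain ⟨m', rfl⟩ : ∃ m', m = m' + 1 := ⟨m - 1, by omega⟩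
  have hQm : BC.Monic ι δ (m' + 1) Q := ⟨_, ⟨u, rfl⟩, hQ⟩
  have hPm : BC.Monic ι δ n P := ⟨_, ⟨v, rfl⟩, hP⟩
  set T := m' + 1 + n with hT
  set N := T * T with hN
  have hmono : ∀ a b : ℕ, BC.Monic ι δ ((m' + 1) * a + n * b) (Q ^ a * P ^ b) := fun a b =>
    BC.monic_mul ι δ hrel (BC.monic_pow ι δ hrel hQm a) (BC.monic_pow ι δ hrel hPm b)
  set ψ : Fin (T + 1) × Fin (T + 1) → Fin (N + 1) → ℂ := fun p j =>
    PowerSeries.constantCoeff (R := ℂ)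
      (BC.coeffD ι δ hspan (Q ^ (p.1 : ℕ) * P ^ (p.2 : ℕ)) (j : ℕ)) with hψ
  have hnli : ¬ LinearIndependent ℂ ψ := by
    intro hli
    have hcard := hli.fintype_card_le_finrank
    rw [Module.finrank_pi ℂ] at hcard
    simp only [Fintype.card_prod, Fintype.card_fin] at hcard
    have hTT : (T + 1) * (T + 1) = T * T + 2 * T + 1 := by ring
    omega
  obtain ⟨g, hgsum, p₀, hg₀⟩ := Fintype.not_linearIndependent_iff.mp hnli
  have hord : ∀ p : Fin (T + 1) × Fin (T + 1),
      (m' + 1) * (p.1 : ℕ) + n * (p.2 : ℕ) ≤ N := by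
    intro p
    have h1 : (p.1 : ℕ) ≤ T := Nat.lt_succ_iff.mp p.1.isLt
    have h2 : (p.2 : ℕ) ≤ T := Nat.lt_succ_iff.mp p.2.isLt
    calc (m' + 1) * (p.1 : ℕ) + n * (p.2 : ℕ) ≤ (m' + 1) * T + n * T :=
          Nat.add_le_add (Nat.mul_le_mul_left _ h1) (Nat.mul_le_mul_left _ h2)
      _ = T * T := by rw [hT]; ring
  set OpA : D := ∑ p : Fin (T + 1) × Fin (T + 1),
    ι (PowerSeries.C (R := ℂ) (g p)) * (Q ^ (p.1 : ℕ) * P ^ (p.2 : ℕ)) with hOpA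
  have hcoeffA : ∀ i : ℕ, BC.coeffD ι δ hspan OpA i =
      ∑ p : Fin (T + 1) × Fin (T + 1),
        PowerSeries.C (R := ℂ) (g p) * BC.coeffD ι δ hspan (Q ^ (p.1 : ℕ) * P ^ (p.2 : ℕ)) i := by
    intro i
    rw [hOpA, BC.coeffD_sum ι δ hspan hind]
    exact Finset.sum_congr rfl fun p _ => BC.coeffD_iota_mul ι δ hspan hind _ _ i
  have hA : OpA = 0 := by
    by_contra hA0
    have hδc : ∀ c : ℂ, Commute (ι (PowerSeries.C (R := ℂ) c)) δ := fun c => by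
      have h := hrel (PowerSeries.C (R := ℂ) c)
      rw [PowerSeries.derivative_C, map_zero, add_zero] at h
      exact h.symm
    have hιc : ∀ (c : ℂ) (b : PowerSeries ℂ), Commute (ι (PowerSeries.C (R := ℂ) c)) (ι b) :=
      fun c b => by
        show _ * _ = _ * _
        rw [← map_mul, ← map_mul, mul_comm]
    have hQc : ∀ c : ℂ, Commute (ι (PowerSeries.C (R := ℂ) c)) Q := fun c => by
      rw [hQ]
      exact ((hδc c).pow_right _).add_right
        (Commute.sum_right _ _ _ fun i _ => (hιc c (u i)).mul_right ((hδc c).pow_right i))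
    have hcQ : Commute Q OpA := by
      rw [hOpA]
      refine Commute.sum_right _ _ _ fun p _ => ?_
      exact (hQc (g p)).symm.mul_right (((Commute.refl Q).pow_right _).mul_right
        ((show Commute Q P from hcomm.symm).pow_right _))
    obtain ⟨d, hd1, hd2⟩ := BC.exists_top ι δ hspan hind hA0
    have hdN : d ≤ N := by
      by_contra hdn
      apply hd1
      rw [hcoeffA d]
      refine Finset.sum_eq_zero fun p _ => ?_
      rw [(BC.coeffD_monic ι δ hspan hind (hmono (p.1 : ℕ) (p.2 : ℕ))).2 d
        (by have := hord p; omega), mul_zero]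
    have hder := BC.lead_deriv_zero ι δ hrel hspan hind hd1 hd2 hQm hcQ.symm.eq
    have hccne := BC.constCoeff_ne_zero_of_deriv hd1 hder
    apply hccne
    rw [hcoeffA d, map_sum]
    have hfun := congrFun hgsum (⟨d, by omega⟩ : Fin (N + 1))
    rw [Finset.sum_apply] at hfun
    calc ∑ p : Fin (T + 1) × Fin (T + 1), PowerSeries.constantCoeff (R := ℂ)
          (PowerSeries.C (R := ℂ) (g p) * BC.coeffD ι δ hspan (Q ^ (p.1 : ℕ) * P ^ (p.2 : ℕ)) d)
        = ∑ p : Fin (T + 1) × Fin (T + 1), g p • ψ p (⟨d, by omega⟩ : Fin (N + 1)) := by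
          refine Finset.sum_congr rfl fun p _ => ?_
          rw [map_mul, PowerSeries.constantCoeff_C, hψ]
          rfl
      _ = 0 := by simpa using hfun
  -- assemble the polynomial
  set E : Fin (T + 1) × Fin (T + 1) → (Fin 2 →₀ ℕ) := fun p =>
    Finsupp.single 0 (p.1 : ℕ) + Finsupp.single 1 (p.2 : ℕ) with hE
  have hE0 : ∀ p, E p 0 = (p.1 : ℕ) := fun p => by
    simp [hE, Finsupp.single_apply]
  have hE1 : ∀ p, E p 1 = (p.2 : ℕ) := fun p => by
    simp [hE, Finsupp.single_apply]
  have hEinj : Function.Injective E := by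
    intro p q h
    have h0 : (p.1 : ℕ) = (q.1 : ℕ) := by rw [← hE0 p, ← hE0 q, h]
    have h1 : (p.2 : ℕ) = (q.2 : ℕ) := by rw [← hE1 p, ← hE1 q, h]
    exact Prod.ext (Fin.ext h0) (Fin.ext h1)
  set F : MvPolynomial (Fin 2) ℂ :=
    ∑ p : Fin (T + 1) × Fin (T + 1), MvPolynomial.monomial (E p) (g p) with hF
  have hcoeff : ∀ p, MvPolynomial.coeff (E p) F = g p := by
    intro p
    rw [hF, MvPolynomial.coeff_sum]
    rw [Finset.sum_eq_single_of_mem p (Finset.mem_univ p)]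
    · rw [MvPolynomial.coeff_monomial, if_pos rfl]
    · intro q _ hq
      rw [MvPolynomial.coeff_monomial, if_neg (fun hEq => hq (hEinj hEq))]
  have hFne : F ≠ 0 := fun h => hg₀ (by rw [← hcoeff p₀, h, MvPolynomial.coeff_zero])
  have hsupp : F.support ⊆ Finset.univ.image E := by
    intro mono hmem
    by_contra hmem2
    apply MvPolynomial.mem_support_iff.mp hmem
    rw [hF, MvPolynomial.coeff_sum]
    refine Finset.sum_eq_zero fun q _ => ?_
    rw [MvPolynomial.coeff_monomial,
      if_neg (fun h => hmem2 (Finset.mem_image.mpr ⟨q, Finset.mem_univ q, h⟩))]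
  refine ⟨F, hFne, ?_⟩
  calc ∑ mono ∈ F.support,
        ι (PowerSeries.C (R := ℂ) (MvPolynomial.coeff mono F)) * Q ^ mono 0 * P ^ mono 1
      = ∑ mono ∈ Finset.univ.image E,
          ι (PowerSeries.C (R := ℂ) (MvPolynomial.coeff mono F)) * Q ^ mono 0 * P ^ mono 1 :=
        Finset.sum_subset hsupp (fun mono _ h => by
          rw [MvPolynomial.notMem_support_iff.mp h, map_zero, map_zero, zero_mul, zero_mul])
    _ = ∑ p : Fin (T + 1) × Fin (T + 1),
          ι (PowerSeries.C (R := ℂ) (MvPolynomial.coeff (E p) F)) * Q ^ (E p 0) * P ^ (E p 1) :=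
        Finset.sum_image (fun x _ y _ h => hEinj h)
    _ = OpA := by
        rw [hOpA]
        exact Finset.sum_congr rfl fun p _ => by rw [hcoeff, hE0, hE1, mul_assoc]
    _ = 0 := hA
end

section
/- Let Ψ(z) be an r×r matrix of holomorphic functions near z₀ with det Ψ having a simple zero at z₀. Then Ψ^{−1}(z) = S/(z−z₀) + O(1) near z₀ where the matrix S = Res_{z₀} Ψ^{−1} has rank exactly 1. -/
open Matrix Filter Module Submodule

section Aux

/-- The determinant of an entrywise-analytic family of matrices is analytic. -/
lemma analyticAt_det_aux {r : ℕ} {z₀ : ℂ} {A : ℂ → Matrix (Fin r) (Fin r) ℂ}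
    (h : ∀ i j, AnalyticAt ℂ (fun z => A z i j) z₀) :
    AnalyticAt ℂ (fun z => (A z).det) z₀ := by
  simp only [Matrix.det_apply]
  refine Finset.analyticAt_fun_sum _ (fun σ _ => ?_)
  simp only [Units.smul_def, zsmul_eq_mul]
  exact analyticAt_const.mul (Finset.analyticAt_fun_prod _ (fun i _ => h _ _))

/-- Entries of the adjugate of an entrywise-analytic family are analytic. -/
lemma analyticAt_adjugate_aux {r : ℕ} {z₀ : ℂ} {A : ℂ → Matrix (Fin r) (Fin r) ℂ}
    (h : ∀ i j, AnalyticAt ℂ (fun z => A z i j) z₀) (i j : Fin r) :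
    AnalyticAt ℂ (fun z => (A z).adjugate i j) z₀ := by
  simp only [Matrix.adjugate_apply]
  refine analyticAt_det_aux (fun k l => ?_)
  by_cases hk : k = j
  · simpa [Matrix.updateRow_apply, hk] using (analyticAt_const :
      AnalyticAt ℂ (fun _ : ℂ => (Pi.single i 1 : Fin r → ℂ) l) z₀)
  · simpa [Matrix.updateRow_apply, hk] using h k l

/-- A square matrix all of whose rows vanish except possibly one has rank at most `1`. -/
lemma rank_le_one_of_rows_aux {r : ℕ} (C : Matrix (Fin r) (Fin r) ℂ) (j : Fin r)
    (h : ∀ k, k ≠ j → C k = 0) : C.rank ≤ 1 := by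
  have hle : LinearMap.range C.mulVecLin ≤ Submodule.span ℂ {(Pi.single j 1 : Fin r → ℂ)} := by
    rintro x ⟨v, rfl⟩
    have hx : C.mulVec v = (C.mulVec v j) • (Pi.single j 1 : Fin r → ℂ) := by
      funext k
      by_cases hk : k = j
      · subst hk; simp
      · have h0 : C k = 0 := h k hk
        simp [Matrix.mulVec, dotProduct, h0, Pi.single_apply, hk]
    rw [Matrix.mulVecLin_apply, hx]
    exact Submodule.smul_mem _ _ (Submodule.mem_span_singleton_self _)
  refine le_trans (Submodule.finrank_mono hle) ?_
  have h0 : (Pi.single j 1 : Fin r → ℂ) ≠ 0 := fun h => by simpa using congrFun h j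
  exact le_of_eq (finrank_span_singleton h0)

/-- Subadditivity of matrix rank. -/
lemma rank_add_le_aux {r : ℕ} (A B : Matrix (Fin r) (Fin r) ℂ) :
    (A + B).rank ≤ A.rank + B.rank := by
  have hle : LinearMap.range (A + B).mulVecLin ≤
      LinearMap.range A.mulVecLin ⊔ LinearMap.range B.mulVecLin := by
    rintro x ⟨v, rfl⟩
    rw [Matrix.mulVecLin_add, LinearMap.add_apply]
    exact Submodule.add_mem_sup ⟨v, rfl⟩ ⟨v, rfl⟩
  exact le_trans (Submodule.finrank_mono hle)
    (Submodule.finrank_add_le_finrank_add_finrank _ _)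

/-- The adjugate of a singular matrix has rank at most one. -/
lemma rank_adjugate_le_one_aux {r : ℕ} (A : Matrix (Fin r) (Fin r) ℂ) (hA : A.det = 0) :
    A.adjugate.rank ≤ 1 := by
  by_cases h0 : A.adjugate = 0
  · simp [h0]
  · obtain ⟨i, j, hij⟩ : ∃ i j, A.adjugate i j ≠ 0 := by
      by_contra hc; push_neg at hc
      exact h0 (by ext i j; exact hc i j)
    set B := A.updateRow j (Pi.single i 1) with hB
    have hBdet : B.det ≠ 0 := by rwa [Matrix.adjugate_apply] at hij
    have hBrank : B.rank = r := by
      rw [Matrix.rank_of_isUnit _ ((Matrix.isUnit_iff_isUnit_det B).mpr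
        (isUnit_iff_ne_zero.mpr hBdet))]
      simp
    have hBA : (B - A).rank ≤ 1 := by
      refine rank_le_one_of_rows_aux _ j (fun k hk => ?_)
      funext l
      simp [Matrix.sub_apply, hB, Matrix.updateRow_ne hk]
    have hr : (r : ℕ) ≤ A.rank + 1 := by
      have h1 : B = A + (B - A) := by abel
      have h2 : B.rank ≤ A.rank + (B - A).rank := by
        conv_lhs => rw [h1]
        exact rank_add_le_aux _ _
      omega
    have hmul : A.adjugate * A = 0 := by rw [Matrix.adjugate_mul, hA, zero_smul]
    have h3 := Matrix.rank_add_rank_le_card_of_mul_eq_zero hmul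
    simp only [Fintype.card_fin] at h3
    omega

/-- A nonzero matrix has rank at least one. -/
lemma one_le_rank_aux {r : ℕ} (A : Matrix (Fin r) (Fin r) ℂ) (hA : A ≠ 0) :
    1 ≤ A.rank := by
  obtain ⟨i, j, hij⟩ : ∃ i j, A i j ≠ 0 := by
    by_contra hc; push_neg at hc
    exact hA (by ext i j; exact hc i j)
  rw [Nat.one_le_iff_ne_zero]
  intro h0
  have hbot : LinearMap.range A.mulVecLin = ⊥ := Submodule.finrank_eq_zero.mp h0
  have hmem : A.mulVec (Pi.single j 1) ∈ LinearMap.range A.mulVecLin :=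
    ⟨Pi.single j 1, rfl⟩
  rw [hbot, Submodule.mem_bot] at hmem
  have h1 : A.mulVec (Pi.single j 1) i = 0 := by rw [hmem]; rfl
  simp only [Matrix.mulVec_single, mul_one] at h1
  exact hij (by simpa using h1)

end Aux

/-- Let `Ψ(z)` be an `r×r` matrix of holomorphic functions near `z₀`, invertible on a
punctured neighborhood of `z₀`, such that `det Ψ` has a simple zero at `z₀`
(`det Ψ(z₀) = 0` and `(det Ψ)'(z₀) ≠ 0`).  Then `Ψ⁻¹(z) = S/(z−z₀) + O(1)` near `z₀`
where the residue matrix `S` has rank exactly `1`. -/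
theorem inverse_residue_rank_one
    (r : ℕ) (z₀ : ℂ)
    (Ψ : ℂ → Matrix (Fin r) (Fin r) ℂ)
    (hΨ : ∀ i j, AnalyticAt ℂ (fun z => Ψ z i j) z₀)
    (hinv : ∀ᶠ z in nhdsWithin z₀ {z₀}ᶜ, IsUnit (Ψ z))
    (hdet0 : (Ψ z₀).det = 0)
    (hdet' : deriv (fun z => (Ψ z).det) z₀ ≠ 0) :
    ∃ S : Matrix (Fin r) (Fin r) ℂ, S.rank = 1 ∧
      ∃ δ > 0, ∃ C : ℝ, ∀ z, z ≠ z₀ → ‖z - z₀‖ < δ →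
        ∀ i j, ‖((Ψ z)⁻¹ - (z - z₀)⁻¹ • S) i j‖ ≤ C := by
  classical
  set d : ℂ → ℂ := fun z => (Ψ z).det with hd_def
  have hd : AnalyticAt ℂ d z₀ := analyticAt_det_aux hΨ
  obtain ⟨p, hp⟩ := hd
  set q : ℂ → ℂ := dslope d z₀ with hq_def
  have hq : AnalyticAt ℂ q z₀ := ⟨p.fslope, hp.has_fpower_series_dslope_fslope⟩
  have hq0 : q z₀ = deriv d z₀ := dslope_same d z₀
  have hqne : q z₀ ≠ 0 := by rw [hq0]; exact hdet'
  have hd0 : d z₀ = 0 := hdet0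
  have hdz : ∀ z, d z = (z - z₀) * q z := by
    intro z
    by_cases hz : z = z₀
    · subst hz; simp [hd0]
    · have h1 := sub_smul_dslope d z₀ z
      rw [hd0, sub_zero] at h1
      rw [← h1, hq_def, smul_eq_mul]
  have hqinv : AnalyticAt ℂ (fun z => (q z)⁻¹) z₀ := hq.inv hqne
  set m : Fin r → Fin r → ℂ → ℂ := fun i j z => (q z)⁻¹ * (Ψ z).adjugate i j with hm_def
  have hm : ∀ i j, AnalyticAt ℂ (m i j) z₀ :=
    fun i j => hqinv.mul (analyticAt_adjugate_aux hΨ i j)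
  set S : Matrix (Fin r) (Fin r) ℂ := (q z₀)⁻¹ • (Ψ z₀).adjugate with hS_def
  have hSm : ∀ i j, S i j = m i j z₀ := fun i j => rfl
  -- key pointwise identity for the inverse
  have hkey : ∀ z, ∀ i j, (Ψ z)⁻¹ i j = (z - z₀)⁻¹ * m i j z := by
    intro z i j
    rw [Matrix.inv_def]
    simp only [Ring.inverse_eq_inv, Matrix.smul_apply, smul_eq_mul, hm_def]
    rw [show (Ψ z).det = d z from rfl, hdz z, mul_inv]
    ring
  -- the rank-one property of S
  have hq_ev : ∀ᶠ z in nhds z₀, q z ≠ 0 := hq.continuousAt.eventually_ne hqne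
  have hadj_ne : (Ψ z₀).adjugate ≠ 0 := by
    intro hcon
    have hm0 : ∀ i k, m i k z₀ = 0 := by
      intro i k
      simp [hm_def, hcon]
    have hDmul : (Matrix.of (fun i k => deriv (m i k) z₀) * Ψ z₀) = 1 := by
      ext i j
      have hgev : (fun z => ∑ k, m i k z * Ψ z k j) =ᶠ[nhds z₀]
          (fun z => (z - z₀) * (1 : Matrix (Fin r) (Fin r) ℂ) i j) := by
        filter_upwards [hq_ev] with z hqz
        have hsum : (∑ k, m i k z * Ψ z k j) = (q z)⁻¹ * ((Ψ z).adjugate * Ψ z) i j := by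
          rw [Matrix.mul_apply, Finset.mul_sum]
          refine Finset.sum_congr rfl (fun k _ => ?_)
          simp only [hm_def]
          ring
        rw [hsum, Matrix.adjugate_mul]
        simp only [Matrix.smul_apply, smul_eq_mul]
        rw [show (Ψ z).det = d z from rfl, hdz z]
        field_simp
      have hg : HasDerivAt (fun z => ∑ k, m i k z * Ψ z k j)
          (∑ k, (deriv (m i k) z₀ * Ψ z₀ k j + m i k z₀ * deriv (fun z => Ψ z k j) z₀)) z₀ := by
        refine HasDerivAt.fun_sum (fun k _ => ?_)
        exact ((hm i k).differentiableAt.hasDerivAt).mul ((hΨ k j).differentiableAt.hasDerivAt)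
      have hh : HasDerivAt (fun z => (z - z₀) * (1 : Matrix (Fin r) (Fin r) ℂ) i j)
          ((1 : Matrix (Fin r) (Fin r) ℂ) i j) z₀ := by
        simpa using ((hasDerivAt_id z₀).sub_const z₀).mul_const ((1 : Matrix (Fin r) (Fin r) ℂ) i j)
      have hg' : HasDerivAt (fun z => ∑ k, m i k z * Ψ z k j)
          ((1 : Matrix (Fin r) (Fin r) ℂ) i j) z₀ := hh.congr_of_eventuallyEq hgev
      have hv := hg.unique hg'
      rw [Matrix.mul_apply, ← hv]
      refine Finset.sum_congr rfl (fun k _ => ?_)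
      rw [hm0 i k, zero_mul, add_zero]
      rfl
    have hdet1 := congrArg Matrix.det hDmul
    rw [Matrix.det_mul, hdet0, mul_zero, Matrix.det_one] at hdet1
    exact zero_ne_one hdet1
  have hS_ne : S ≠ 0 := by
    intro h0
    apply hadj_ne
    rw [hS_def] at h0
    rcases smul_eq_zero.mp h0 with h | h
    · exact absurd h (inv_ne_zero hqne)
    · exact h
  have hrank_le : S.rank ≤ 1 := by
    have hS2 : S = ((q z₀)⁻¹ • (1 : Matrix (Fin r) (Fin r) ℂ)) * (Ψ z₀).adjugate := by
      rw [Matrix.smul_mul, Matrix.one_mul, hS_def]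
    have hu : IsUnit ((q z₀)⁻¹ • (1 : Matrix (Fin r) (Fin r) ℂ)).det := by
      rw [Matrix.det_smul, Matrix.det_one, mul_one]
      exact isUnit_iff_ne_zero.mpr (pow_ne_zero _ (inv_ne_zero hqne))
    rw [hS2, Matrix.rank_mul_eq_right_of_isUnit_det _ _ hu]
    exact rank_adjugate_le_one_aux _ hdet0
  have hrank : S.rank = 1 := le_antisymm hrank_le (one_le_rank_aux S hS_ne)
  -- the boundedness property
  have hf : ∀ i j, AnalyticAt ℂ (dslope (m i j) z₀) z₀ := by
    intro i j
    obtain ⟨pm, hpm⟩ := hm i j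
    exact ⟨pm.fslope, hpm.has_fpower_series_dslope_fslope⟩
  set C : ℝ := ∑ i : Fin r, ∑ j : Fin r, (‖dslope (m i j) z₀ z₀‖ + 1) with hC_def
  have hev : ∀ᶠ z in nhds z₀, ∀ i j : Fin r,
      ‖dslope (m i j) z₀ z‖ ≤ ‖dslope (m i j) z₀ z₀‖ + 1 := by
    rw [eventually_all]
    intro i
    rw [eventually_all]
    intro j
    have hc : ContinuousAt (fun z => ‖dslope (m i j) z₀ z‖) z₀ :=
      continuous_norm.continuousAt.comp (hf i j).continuousAt
    exact (hc.tendsto.eventually_lt_const (lt_add_one _)).mono (fun z hz => hz.le)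
  obtain ⟨δ, hδ, hδev⟩ := Metric.eventually_nhds_iff.mp hev
  refine ⟨S, hrank, δ, hδ, C, ?_⟩
  intro z hz hzd i j
  have hzz : dist z z₀ < δ := by rwa [Complex.dist_eq]
  have hb := hδev hzz i j
  have he : ((Ψ z)⁻¹ - (z - z₀)⁻¹ • S) i j = dslope (m i j) z₀ z := by
    rw [dslope_of_ne _ hz, slope_def_field]
    simp only [Matrix.sub_apply, Matrix.smul_apply, smul_eq_mul, hkey z i j, hSm]
    have hzne : z - z₀ ≠ 0 := sub_ne_zero.mpr hz
    field_simp
  rw [he]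
  have step1 : ‖dslope (m i j) z₀ z₀‖ + 1 ≤
      ∑ j' : Fin r, (‖dslope (m i j') z₀ z₀‖ + 1) :=
    Finset.single_le_sum (f := fun j' => ‖dslope (m i j') z₀ z₀‖ + 1)
      (fun k _ => by positivity) (Finset.mem_univ j)
  have step2 : (∑ j' : Fin r, (‖dslope (m i j') z₀ z₀‖ + 1)) ≤ C := by
    rw [hC_def]
    exact Finset.single_le_sum
      (f := fun i' => ∑ j' : Fin r, (‖dslope (m i' j') z₀ z₀‖ + 1))
      (fun k _ => Finset.sum_nonneg (fun _ _ => by positivity)) (Finset.mem_univ i)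
  exact hb.trans (step1.trans step2)
end

section
/- Let ω = e^{2πi/m} and let p ∈ ℂ((λ^{−1})) with r and m̃ = m/r as defined by the period of k ↦ p(ω^kλ). Set f(z,w) = ∏_{j=0}^{m̃−1}(w − p̃(ω^{jr}λ^r)) ∈ ℂ((λ^{−1}))[w], where p(λ) = p̃(λ^r). Then the coefficients of f, as elements of ℂ((λ^{−1})), are invariant under λ ↦ ωλ; hence they lie in the subring of series in λ^{−m}, i.e. f(z,w) ∈ ℂ((z^{−1}))[w] with z = λ^m. -/
/-- Substitution `λ ↦ a·λ` on `ℂ((λ⁻¹))`, modeled as Laurent series in `t = λ⁻¹`: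
the coefficient of `t^n` (i.e. of `λ^(-n)`) is multiplied by `a^(-n)`. -/
noncomputable def substL (a : ℂˣ) (p : LaurentSeries ℂ) : LaurentSeries ℂ :=
  { coeff := fun n => ((a ^ (-n) : ℂˣ) : ℂ) * p.coeff n,
    isPWO_support' := p.isPWO_support.mono (by
      intro n hn
      simp only [Function.mem_support, ne_eq] at hn
      exact fun h => hn (by rw [h, mul_zero])) }

open Polynomial

lemma substL_coeff (a : ℂˣ) (p : LaurentSeries ℂ) (n : ℤ) :
    (substL a p).coeff n = ((a ^ (-n) : ℂˣ) : ℂ) * p.coeff n := rfl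

lemma substL_support (a : ℂˣ) (p : LaurentSeries ℂ) :
    (substL a p).support = p.support := by
  ext n
  simp only [HahnSeries.mem_support, substL_coeff, ne_eq, mul_eq_zero, not_or]
  have := zpow_ne_zero (-n) (Units.ne_zero a)
  rw [Units.val_zpow_eq_zpow_val]
  tauto

lemma substL_one (a : ℂˣ) : substL a 1 = 1 := by
  ext n
  rcases eq_or_ne n 0 with h | h
  · simp [substL_coeff, h]
  · simp [substL_coeff, HahnSeries.coeff_one, h]

lemma substL_add (a : ℂˣ) (p q : LaurentSeries ℂ) :
    substL a (p + q) = substL a p + substL a q := by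
  ext n
  simp [substL_coeff, HahnSeries.coeff_add, mul_add]

lemma substL_mul (a : ℂˣ) (p q : LaurentSeries ℂ) :
    substL a (p * q) = substL a p * substL a q := by
  ext n
  have hA : Finset.antidiagonal (substL a p).isPWO_support
      (substL a q).isPWO_support n =
      Finset.antidiagonal p.isPWO_support q.isPWO_support n := by
    ext ij
    simp [Finset.mem_addAntidiagonal, substL_support]
  rw [substL_coeff, HahnSeries.coeff_mul, HahnSeries.coeff_mul, hA, Finset.mul_sum]
  refine Finset.sum_congr rfl fun ij hij => ?_
  rw [Finset.mem_antidiagonal] at hij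
  rw [substL_coeff, substL_coeff]
  have : (a ^ (-n) : ℂˣ) = a ^ (-ij.1) * a ^ (-ij.2) := by
    rw [← zpow_add, ← neg_add, hij.2.2]
  rw [this]
  push_cast
  ring

lemma substL_substL (a b : ℂˣ) (p : LaurentSeries ℂ) :
    substL a (substL b p) = substL (a * b) p := by
  ext n
  simp only [substL_coeff, mul_zpow, Units.val_mul]
  ring

/-- `substL a` as a ring homomorphism. -/
noncomputable def substLHom (a : ℂˣ) : LaurentSeries ℂ →+* LaurentSeries ℂ where
  toFun := substL a
  map_one' := substL_one a
  map_mul' := substL_mul a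
  map_zero' := by ext n; simp [substL_coeff]
  map_add' := substL_add a

/-- Let `ω = exp(2πi/m)`, `m = r·m̃`, and let `p ∈ ℂ((λ⁻¹))` be invariant under
`λ ↦ ω^m̃ λ`.  Set `f(z,w) = ∏_{j=0}^{m̃-1} (w − p(ω^j λ)) ∈ ℂ((λ⁻¹))[w]`
(its `j`-th factor equals `w − p̃(ω^{jr} λ^r)` when `p(λ) = p̃(λ^r)`).  Then each
coefficient of `f` is invariant under `λ ↦ ω λ`, and hence is a series in `λ^{-m}`:
its coefficient in any degree not divisible by `m` vanishes, i.e.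
`f(z,w) ∈ ℂ((z⁻¹))[w]` with `z = λ^m`. -/
theorem char_poly_coeffs_in_z
    (r mt : ℕ) (hr : 0 < r) (hmt : 0 < mt)
    (m : ℕ) (hm : m = r * mt)
    (ω : ℂˣ) (hω : (ω : ℂ) = Complex.exp (2 * Real.pi * Complex.I / m))
    (p : LaurentSeries ℂ)
    (hp : substL (ω ^ mt) p = p)
    (f : Polynomial (LaurentSeries ℂ))
    (hf : f = ∏ j ∈ Finset.range mt, (X - C (substL (ω ^ j) p))) :
    ∀ i : ℕ, substL ω (f.coeff i) = f.coeff i ∧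
      ∀ n : ℤ, ¬ ((m : ℤ) ∣ n) → (f.coeff i).coeff n = 0 := by
  have hm0 : m ≠ 0 := by rw [hm]; exact Nat.mul_ne_zero hr.ne' hmt.ne'
  -- step 1: f is invariant under mapping coefficients by substL ω
  have hmap : f.map (substLHom ω) = f := by
    obtain ⟨k, rfl⟩ : ∃ k, mt = k + 1 := ⟨mt - 1, (Nat.succ_pred_eq_of_pos hmt).symm⟩
    have hg : ∀ j : ℕ, (substLHom ω) (substL (ω ^ j) p) = substL (ω ^ (j + 1)) p := by
      intro j
      show substL ω (substL (ω ^ j) p) = _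
      rw [substL_substL, ← pow_succ']
    have hcycle : substL (ω ^ (k + 1)) p = substL (ω ^ 0) p := by
      rw [pow_zero]
      rw [hp]
      ext n
      simp [substL_coeff]
    rw [hf, Polynomial.map_prod]
    simp only [Polynomial.map_sub, Polynomial.map_X, Polynomial.map_C, hg]
    rw [Finset.prod_range_succ, Finset.prod_range_succ', hcycle]
  intro i
  have h1 : substL ω (f.coeff i) = f.coeff i := by
    conv_rhs => rw [← hmap]
    rw [Polynomial.coeff_map]
    rfl
  refine ⟨h1, fun n hn => ?_⟩
  by_contra hc
  have := congrArg (fun q : LaurentSeries ℂ => q.coeff n) h1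
  simp only [substL_coeff] at this
  have hω1 : ((ω ^ (-n) : ℂˣ) : ℂ) = 1 :=
    mul_right_cancel₀ hc (by rw [this, one_mul])
  have hωn : (ω : ℂ) ^ (-n) = 1 := by
    rw [← Units.val_zpow_eq_zpow_val]; exact hω1
  have hprim : IsPrimitiveRoot (ω : ℂ) m := by
    rw [hω]; exact Complex.isPrimitiveRoot_exp m hm0
  have : (m : ℤ) ∣ -n := (hprim.zpow_eq_one_iff_dvd _).mp hωn
  exact hn ((dvd_neg).mp this)
end
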